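/- arXiv:1606.01687 — 3 statements merged into one kernel-verified Lean document; each statement's English description precedes it below -/
import Mathlib

section
/- Let H be a Hilbert space, L a finite-dimensional subspace of H with orthonormal basis e₁, …, e_m, and P_L the orthogonal projection onto L. Then for any g₁, …, g_k ∈ H, G((I−P_L)g₁, …, (I−P_L)g_k) = G(g₁, …, g_k, e₁, …, e_m). -/
noncomputable def gram {H : Type*} [NormedAddCommGroup H] [InnerProductSpace ℝ H]
    {n : ℕ} (v : Fin n → H) : ℝ :=
  (Matrix.of fun i j => (inner ℝ (v i) (v j) : ℝ)).det

/-- If `L` is a finite-dimensional subspace of a Hilbert space `H` with orthonormal basis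
`e₁, …, e_m` and `P_L` is the orthogonal projection onto `L`, then for any `g₁, …, g_k ∈ H`,
`G((I−P_L)g₁, …, (I−P_L)g_k) = G(g₁, …, g_k, e₁, …, e_m)`. -/
theorem gram_sub_proj_eq {H : Type*} [NormedAddCommGroup H] [InnerProductSpace ℝ H]
    [CompleteSpace H] {m : ℕ} (e : Fin m → H) (he : Orthonormal ℝ e)
    (L : Submodule ℝ H) [FiniteDimensional ℝ L] (hL : L = Submodule.span ℝ (Set.range e))
    {k : ℕ} (g : Fin k → H) :
    gram (fun i => g i - (L.orthogonalProjection (g i) : H)) = gram (Fin.append g e) := by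
  classical
  -- build an orthonormal basis of L from e
  have hspan : Submodule.span ℝ ((Finset.univ : Finset (Fin m)).image e : Set H) = L := by
    rw [hL, Finset.coe_image, Finset.coe_univ, Set.image_univ]
  let b : OrthonormalBasis (Finset.univ : Finset (Fin m)) ℝ L :=
    (OrthonormalBasis.span he Finset.univ).map (LinearIsometryEquiv.ofEq _ _ hspan)
  have hb : ∀ i, (b i : H) = e i := by
    intro i
    simp [b]
  -- projection formula
  have hproj : ∀ x : H, (L.orthogonalProjection x : H) =
      ∑ l : Fin m, (inner ℝ (e l) x : ℝ) • e l := by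
    intro x
    have := b.orthogonalProjectionOnto_apply_eq_sum x
    have h2 := congrArg (Subtype.val : L → H) this
    rw [h2]
    push_cast
    rw [← (Finset.univ : Finset (Fin m)).sum_attach
      (fun l => (inner ℝ (e l) x : ℝ) • e l)]
    refine Finset.sum_congr rfl fun l _ => by rw [hb]
  -- inner product of residuals
  have hinner : ∀ i j, (inner ℝ (g i - (L.orthogonalProjection (g i) : H))
      (g j - (L.orthogonalProjection (g j) : H)) : ℝ)
      = (inner ℝ (g i) (g j) : ℝ) - ∑ l : Fin m, (inner ℝ (g i) (e l) : ℝ) * inner ℝ (e l) (g j) := by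
    intro i j
    have hmem : g i - (L.orthogonalProjection (g i) : H) ∈ Lᗮ :=
      Submodule.sub_starProjection_mem_orthogonal (g i)
    have h1 : (inner ℝ (g i - (L.orthogonalProjection (g i) : H))
        ((L.orthogonalProjection (g j) : H)) : ℝ) = 0 :=
      by rw [real_inner_comm]; exact hmem _ (L.orthogonalProjection (g j)).2
    rw [inner_sub_right, h1, sub_zero, inner_sub_left, hproj (g i), sum_inner]
    congr 1
    refine Finset.sum_congr rfl fun l _ => ?_
    rw [real_inner_smul_left, real_inner_comm (e l) (g i)]
  -- matrix computation
  unfold gram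
  have hre : (Matrix.of fun i j => (inner ℝ (Fin.append g e i) (Fin.append g e j) : ℝ)).det
      = (Matrix.fromBlocks
          (Matrix.of fun i j : Fin k => (inner ℝ (g i) (g j) : ℝ))
          (Matrix.of fun (i : Fin k) (l : Fin m) => (inner ℝ (g i) (e l) : ℝ))
          (Matrix.of fun (l : Fin m) (j : Fin k) => (inner ℝ (e l) (g j) : ℝ))
          (1 : Matrix (Fin m) (Fin m) ℝ)).det := by
    rw [← Matrix.det_submatrix_equiv_self finSumFinEquiv]
    congr 1
    ext i j
    cases i with
    | inl i => cases j with
      | inl j => simp [Matrix.submatrix, Fin.append_left]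
      | inr j => simp [Matrix.submatrix, Fin.append_left, Fin.append_right]
    | inr i => cases j with
      | inl j => simp [Matrix.submatrix, Fin.append_left, Fin.append_right]
      | inr j =>
        simp [Matrix.submatrix, Fin.append_right, Matrix.one_apply, orthonormal_iff_ite.mp he i j]
  rw [hre, Matrix.det_fromBlocks_one₂₂]
  congr 1
  ext i j
  simp only [Matrix.sub_apply, Matrix.mul_apply, Matrix.of_apply]
  rw [hinner i j]
end

section
/- Fix n ∈ ℕ. The set M of functions in L²([0,1]) that admit a representative which is a step function with at most n jumps (i.e., piecewise constant on at most n+1 intervals) is a closed subset of L²([0,1]). -/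
open MeasureTheory Filter Topology

/-- Lebesgue measure restricted to `[0,1]`, whose `L²` space is `L²([0,1])`. -/
noncomputable def mu01 : Measure ℝ := volume.restrict (Set.Icc (0 : ℝ) 1)

/-- `g : ℝ → ℝ` is a step function on `[0,1]` with at most `n` jumps, i.e. it is
constant on each of at most `n+1` consecutive intervals partitioning `[0,1]`. -/
def IsStepAtMostJumps (n : ℕ) (g : ℝ → ℝ) : Prop :=
  ∃ (t : Fin (n + 2) → ℝ) (c : Fin (n + 1) → ℝ),
    Monotone t ∧ t 0 = 0 ∧ t (Fin.last (n + 1)) = 1 ∧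
    ∀ i : Fin (n + 1), ∀ x ∈ Set.Ioo (t i.castSucc) (t i.succ), g x = c i

set_option synthInstance.maxHeartbeats 1000000 in
set_option maxHeartbeats 1000000 in
/-- The set of elements of `L²([0,1])` admitting a representative which is a step function
with at most `n` jumps is closed in `L²([0,1])`. -/
theorem isClosed_step_functions (n : ℕ) :
    IsClosed {f : Lp ℝ 2 mu01 |
      ∃ g : ℝ → ℝ, IsStepAtMostJumps n g ∧ (f : ℝ → ℝ) =ᵐ[mu01] g} := by
  classical
  refine IsSeqClosed.isClosed ?_
  intro F f hF hFf
  simp only [Set.mem_setOf_eq] at hF ⊢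
  choose g hg hfg using hF
  simp only [IsStepAtMostJumps] at hg
  choose t c hmono h0 h1 hstep using hg
  -- a.e. convergent subsequence
  have hmeas : TendstoInMeasure mu01 (fun k => (F k : ℝ → ℝ)) atTop f :=
    tendstoInMeasure_of_tendsto_Lp hFf
  obtain ⟨ns, hns, hae⟩ := hmeas.exists_seq_tendsto_ae
  -- compactness of partition points
  have hcomp : IsCompact {x : Fin (n+2) → ℝ | ∀ i, x i ∈ Set.Icc (0:ℝ) 1} :=
    isCompact_pi_infinite (fun _ => isCompact_Icc)
  have hmem : ∀ k i, t k i ∈ Set.Icc (0:ℝ) 1 := by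
    intro k i
    constructor
    · rw [← h0 k]; exact hmono k (Fin.zero_le i)
    · rw [← h1 k]; exact hmono k (Fin.le_last i)
  obtain ⟨T, hTmem, φ, hφ, hTlim⟩ :=
    hcomp.tendsto_subseq (x := fun k => t (ns k)) (fun k i => hmem _ i)
  set ms : ℕ → ℕ := ns ∘ φ with hms
  have hTlim' : ∀ j, Tendsto (fun k => t (ms k) j) atTop (𝓝 (T j)) := by
    rw [tendsto_pi_nhds] at hTlim
    intro j
    exact hTlim j
  -- properties of limit partition
  have hTmono : Monotone T := by
    intro a b hab
    exact le_of_tendsto_of_tendsto (hTlim' a) (hTlim' b)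
      (Eventually.of_forall fun k => hmono _ hab)
  have hT0 : T 0 = 0 := by
    refine tendsto_nhds_unique (hTlim' 0) ?_
    have : (fun k => t (ms k) 0) = fun _ => (0:ℝ) := funext fun k => h0 _
    rw [this]; exact tendsto_const_nhds
  have hT1 : T (Fin.last (n+1)) = 1 := by
    refine tendsto_nhds_unique (hTlim' (Fin.last (n+1))) ?_
    have : (fun k => t (ms k) (Fin.last (n+1))) = fun _ => (1:ℝ) := funext fun k => h1 _
    rw [this]; exact tendsto_const_nhds
  -- the good set
  set G : Set ℝ := {x | Tendsto (fun i => g (ms i) x) atTop (𝓝 ((f : ℝ → ℝ) x))} with hGdef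
  have hG : ∀ᵐ x ∂mu01, x ∈ G := by
    have haeEq : ∀ᵐ x ∂mu01, ∀ k, (F k : ℝ → ℝ) x = g k x := ae_all_iff.mpr hfg
    filter_upwards [haeEq, hae] with x h1x h2x
    have h2x' : Tendsto (fun i => (F (ms i) : ℝ → ℝ) x) atTop (𝓝 ((f : ℝ → ℝ) x)) :=
      h2x.comp hφ.tendsto_atTop
    exact h2x'.congr fun i => h1x (ms i)
  have hGc : mu01 Gᶜ = 0 := by
    have := ae_iff.mp hG
    simpa [Set.compl_def] using this
  -- good points in nondegenerate intervals
  have hpt : ∀ i : Fin (n+1), T i.castSucc < T i.succ →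
      ∃ x, x ∈ Set.Ioo (T i.castSucc) (T i.succ) ∧ x ∈ G := by
    intro i hi
    by_contra hcon
    push_neg at hcon
    have hsub : Set.Ioo (T i.castSucc) (T i.succ) ⊆ Gᶜ := fun x hx => hcon x hx
    have h0' : mu01 (Set.Ioo (T i.castSucc) (T i.succ)) = 0 :=
      measure_mono_null hsub hGc
    have hIoo : Set.Ioo (T i.castSucc) (T i.succ) ⊆ Set.Icc (0:ℝ) 1 := by
      intro x hx
      exact ⟨le_trans (hTmem i.castSucc).1 hx.1.le, le_trans hx.2.le (hTmem i.succ).2⟩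
    rw [show mu01 = volume.restrict (Set.Icc (0:ℝ) 1) from rfl,
      Measure.restrict_apply' measurableSet_Icc,
      Set.inter_eq_self_of_subset_left hIoo, Real.volume_Ioo] at h0'
    rw [ENNReal.ofReal_eq_zero] at h0'
    linarith
  choose xsel hxIoo hxG using hpt
  -- limit of interval values
  have key : ∀ (i : Fin (n+1)) (x : ℝ), x ∈ Set.Ioo (T i.castSucc) (T i.succ) → x ∈ G →
      Tendsto (fun k => c (ms k) i) atTop (𝓝 ((f : ℝ → ℝ) x)) := by
    intro i x hx hxG'
    have h1' : ∀ᶠ k in atTop, t (ms k) i.castSucc < x :=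
      (hTlim' i.castSucc).eventually_lt_const hx.1
    have h2' : ∀ᶠ k in atTop, x < t (ms k) i.succ :=
      (hTlim' i.succ).eventually_const_lt hx.2
    have hev : (fun k => g (ms k) x) =ᶠ[atTop] (fun k => c (ms k) i) := by
      filter_upwards [h1', h2'] with k hk1 hk2
      exact hstep (ms k) i x ⟨hk1, hk2⟩
    exact Tendsto.congr' hev hxG'
  -- limit values
  set cL : Fin (n+1) → ℝ := fun i =>
    if h : T i.castSucc < T i.succ then (f : ℝ → ℝ) (xsel i h) else 0 with hcL
  have hkeyc : ∀ (i : Fin (n+1)) (h : T i.castSucc < T i.succ),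
      Tendsto (fun k => c (ms k) i) atTop (𝓝 (cL i)) := by
    intro i h
    have := key i (xsel i h) (hxIoo i h) (hxG i h)
    simpa [hcL, dif_pos h] using this
  -- intervals are pairwise disjoint
  have hdisj : ∀ (i j : Fin (n+1)) (x : ℝ), x ∈ Set.Ioo (T i.castSucc) (T i.succ) →
      x ∈ Set.Ioo (T j.castSucc) (T j.succ) → i = j := by
    intro i j x hxi hxj
    by_contra hne
    rcases lt_or_gt_of_ne hne with h | h
    · have hle : (i.succ : Fin (n+2)) ≤ j.castSucc := by
        rw [← Fin.castSucc_lt_iff_succ_le]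
        exact Fin.castSucc_lt_castSucc_iff.mpr h
      exact lt_asymm (hxi.2.trans_le (hTmono hle)) hxj.1
    · have hle : (j.succ : Fin (n+2)) ≤ i.castSucc := by
        rw [← Fin.castSucc_lt_iff_succ_le]
        exact Fin.castSucc_lt_castSucc_iff.mpr h
      exact lt_asymm (hxj.2.trans_le (hTmono hle)) hxi.1
  -- the limit step function
  set gL : ℝ → ℝ := fun x =>
    if h : ∃ i : Fin (n+1), x ∈ Set.Ioo (T i.castSucc) (T i.succ) then cL h.choose else 0
    with hgL
  have hstepL : ∀ i : Fin (n+1), ∀ x ∈ Set.Ioo (T i.castSucc) (T i.succ), gL x = cL i := by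
    intro i x hx
    have hex : ∃ j : Fin (n+1), x ∈ Set.Ioo (T j.castSucc) (T j.succ) := ⟨i, hx⟩
    rw [hgL]
    simp only [dif_pos hex]
    congr 1
    exact hdisj hex.choose i x hex.choose_spec hx
  refine ⟨gL, ⟨T, cL, hTmono, hT0, hT1, hstepL⟩, ?_⟩
  -- a.e. equality
  have hrange : mu01 (Set.range T) = 0 := by
    rw [show mu01 = volume.restrict (Set.Icc (0:ℝ) 1) from rfl,
      Measure.restrict_apply' measurableSet_Icc]
    exact measure_mono_null Set.inter_subset_left ((Set.finite_range T).measure_zero _)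
  have hnr : ∀ᵐ x ∂mu01, x ∉ Set.range T := by
    rw [ae_iff]
    simpa [Set.range] using hrange
  have hIcc : ∀ᵐ x ∂mu01, x ∈ Set.Icc (0:ℝ) 1 :=
    ae_restrict_mem measurableSet_Icc
  filter_upwards [hG, hIcc, hnr] with x hxG' hxI hxN
  -- find the interval containing x
  have hx0 : x ≠ 0 := fun h => hxN ⟨0, by rw [hT0, h]⟩
  have hx1 : x ≠ 1 := fun h => hxN ⟨Fin.last (n+1), by rw [hT1, h]⟩
  set S : Finset (Fin (n+2)) := Finset.univ.filter (fun j => T j < x) with hS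
  have hSne : S.Nonempty :=
    ⟨0, by simp [hS, hT0, lt_of_le_of_ne hxI.1 (Ne.symm hx0)]⟩
  set i := S.max' hSne with hi
  have hiS : i ∈ S := S.max'_mem hSne
  have hTi : T i < x := by
    have := hiS
    rw [hS, Finset.mem_filter] at this
    exact this.2
  have hilast : i ≠ Fin.last (n+1) := by
    intro h
    rw [h, hT1] at hTi
    exact absurd hTi (not_lt.mpr (lt_of_le_of_ne hxI.2 hx1).le)
  obtain ⟨m, hm⟩ := Fin.exists_castSucc_eq.mpr hilast
  have hm1 : T m.castSucc < x := by rw [hm]; exact hTi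
  have hm2 : x < T m.succ := by
    have hns' : x ≤ T m.succ := by
      by_contra h
      push_neg at h
      have hmem' : m.succ ∈ S := by
        rw [hS, Finset.mem_filter]
        exact ⟨Finset.mem_univ _, h⟩
      have := S.le_max' _ hmem'
      rw [← hi, ← hm] at this
      exact absurd this (not_le.mpr (Fin.castSucc_lt_succ (i := m)))
    exact lt_of_le_of_ne hns' (fun h => hxN ⟨m.succ, h.symm⟩)
  have hlt : T m.castSucc < T m.succ := hm1.trans hm2
  have hfx : (f : ℝ → ℝ) x = cL m :=
    tendsto_nhds_unique (key m x ⟨hm1, hm2⟩ hxG') (hkeyc m hlt)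
  rw [hfx, hstepL m x ⟨hm1, hm2⟩]
end

section
/- Let A be a bounded linear operator on a Hilbert space H with finite-dimensional kernel, such that the restriction of A to (ker A)^⊥ has a bounded inverse Ã⁻¹ : range(A) → (ker A)^⊥. Let P be the orthogonal projection onto ker A. Then for any e₁, …, eₙ ∈ H, G(Ae₁, …, Aeₙ) = G(A(I−P)e₁, …, A(I−P)eₙ) ≥ (1/‖Ã⁻¹‖^{2n}) · G((I−P)e₁, …, (I−P)eₙ). -/
open Matrix in
lemma gram_quad {H : Type*} [NormedAddCommGroup H] [InnerProductSpace ℝ H]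
    {n : ℕ} (v : Fin n → H) (c : Fin n → ℝ) :
    star c ⬝ᵥ (Matrix.of fun i j => (inner ℝ (v i) (v j) : ℝ)) *ᵥ c
      = ‖∑ i, c i • v i‖ ^ 2 := by
  rw [← real_inner_self_eq_norm_sq, sum_inner]
  simp only [dotProduct, Matrix.mulVec, Pi.star_apply, star_trivial, Matrix.of_apply,
    real_inner_smul_left, inner_sum, real_inner_smul_right, Finset.mul_sum]
  rw [Finset.sum_comm]
  congr 1; funext i; congr 1; funext j; rw [real_inner_comm]; ring

lemma gram_posSemidef {H : Type*} [NormedAddCommGroup H] [InnerProductSpace ℝ H]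
    {n : ℕ} (v : Fin n → H) :
    (Matrix.of fun i j => (inner ℝ (v i) (v j) : ℝ)).PosSemidef := by
  refine Matrix.PosSemidef.of_dotProduct_mulVec_nonneg ?_ ?_
  · ext i j
    simp [Matrix.conjTranspose_apply, real_inner_comm]
  · intro c
    rw [gram_quad]
    positivity

lemma psd_det_nonneg {n : ℕ} {M : Matrix (Fin n) (Fin n) ℝ} (hM : M.PosSemidef) :
    0 ≤ M.det := by
  rw [hM.1.det_eq_prod_eigenvalues]
  apply Finset.prod_nonneg
  intro i _
  simpa using hM.eigenvalues_nonneg i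

lemma det_le_one_of_le_one {n : ℕ} {B : Matrix (Fin n) (Fin n) ℝ} (hB : B.PosSemidef)
    (h1 : (1 - B).PosSemidef) : B.det ≤ 1 := by
  rw [hB.1.det_eq_prod_eigenvalues]
  apply Finset.prod_le_one
  · intro i _; simpa using hB.eigenvalues_nonneg i
  · intro i _
    set w : Fin n → ℝ := ⇑(hB.1.eigenvectorBasis i) with hw
    have hob : ‖hB.1.eigenvectorBasis i‖ = 1 := hB.1.eigenvectorBasis.orthonormal.1 i
    have hip : (inner ℝ (hB.1.eigenvectorBasis i) (hB.1.eigenvectorBasis i) : ℝ) = 1 := by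
      rw [real_inner_self_eq_norm_sq, hob]; norm_num
    have hnorm : dotProduct (star w) w = 1 := by
      rw [← hip, hw, EuclideanSpace.inner_eq_star_dotProduct]; simp [dotProduct]
    have hval : hB.1.eigenvalues i = dotProduct (star w) (B.mulVec w) := by
      simpa using hB.1.eigenvalues_eq i
    have hvle := h1.dotProduct_mulVec_nonneg w
    rw [Matrix.sub_mulVec, dotProduct_sub, Matrix.one_mulVec, hnorm, ← hval] at hvle
    simpa using hvle

open scoped MatrixOrder in
open Matrix in
lemma det_le_det_of_psd {n : ℕ} {M N : Matrix (Fin n) (Fin n) ℝ} (hM : M.PosSemidef)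
    (hN : N.PosSemidef) (h : (N - M).PosSemidef) : M.det ≤ N.det := by
  by_cases hd : N.det = 0
  · obtain ⟨x, hx0, hx⟩ := (Matrix.exists_mulVec_eq_zero_iff).mpr hd
    have h2 := h.dotProduct_mulVec_nonneg x
    rw [Matrix.sub_mulVec, dotProduct_sub, hx, dotProduct_zero] at h2
    have h3 : star x ⬝ᵥ M *ᵥ x = 0 := le_antisymm (by linarith) (hM.dotProduct_mulVec_nonneg x)
    have h4 : M *ᵥ x = 0 := (hM.dotProduct_mulVec_zero_iff x).mp h3
    have h5 : M.det = 0 := Matrix.exists_mulVec_eq_zero_iff.mp ⟨x, hx0, h4⟩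
    rw [h5, hd]
  · set Q := CFC.sqrt N with hQdef
    have hQpsd : Q.PosSemidef := (CFC.sqrt_nonneg N).posSemidef
    have hQh : Q.IsHermitian := hQpsd.1
    have hQQ : Q * Q = N := CFC.sqrt_mul_sqrt_self N hN.nonneg
    have hQdet : Q.det * Q.det = N.det := by rw [← Matrix.det_mul, hQQ]
    have hQd0 : Q.det ≠ 0 := fun h0 => hd (by rw [← hQdet, h0, mul_zero])
    have hQunit : IsUnit Q.det := isUnit_iff_ne_zero.mpr hQd0
    have hQih : (Q⁻¹).IsHermitian := hQh.inv
    set B := Q⁻¹ * M * Q⁻¹ with hBdef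
    have hBpsd : B.PosSemidef := by
      have := hM.conjTranspose_mul_mul_same Q⁻¹
      rwa [hQih.eq] at this
    have hQNQ : Q⁻¹ * N * Q⁻¹ = 1 := by
      rw [← hQQ, ← Matrix.mul_assoc Q⁻¹ Q Q, Matrix.nonsing_inv_mul Q hQunit,
        Matrix.one_mul, Matrix.mul_nonsing_inv Q hQunit]
    have h1B : (1 - B).PosSemidef := by
      have := h.conjTranspose_mul_mul_same Q⁻¹
      rwa [hQih.eq, Matrix.mul_sub, Matrix.sub_mul, hQNQ] at this
    have hBle := det_le_one_of_le_one hBpsd h1B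
    have hBdet : B.det = Q.det⁻¹ * M.det * Q.det⁻¹ := by
      rw [hBdef, Matrix.det_mul, Matrix.det_mul, Matrix.det_nonsing_inv,
        Ring.inverse_eq_inv']
    have hNdpos : 0 < N.det := lt_of_le_of_ne (psd_det_nonneg hN) (Ne.symm hd)
    rw [hBdet] at hBle
    calc M.det = (Q.det⁻¹ * M.det * Q.det⁻¹) * N.det := by
          rw [← hQdet]; field_simp
      _ ≤ 1 * N.det := by
          exact mul_le_mul_of_nonneg_right hBle (le_of_lt hNdpos)
      _ = N.det := one_mul _

lemma gram_nonneg {H : Type*} [NormedAddCommGroup H] [InnerProductSpace ℝ H]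
    {n : ℕ} (v : Fin n → H) : 0 ≤ gram v :=
  psd_det_nonneg (gram_posSemidef v)

lemma gram_map_le {E F : Type*} [NormedAddCommGroup E] [InnerProductSpace ℝ E]
    [NormedAddCommGroup F] [InnerProductSpace ℝ F] (S : E →L[ℝ] F) {n : ℕ} (x : Fin n → E) :
    gram (fun i => S (x i)) ≤ ‖S‖ ^ (2 * n) * gram x := by
  set M : Matrix (Fin n) (Fin n) ℝ :=
    Matrix.of fun i j => (inner ℝ (S (x i)) (S (x j)) : ℝ) with hMdef
  set G : Matrix (Fin n) (Fin n) ℝ := Matrix.of fun i j => (inner ℝ (x i) (x j) : ℝ) with hGdef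
  set N : Matrix (Fin n) (Fin n) ℝ := (‖S‖ ^ 2) • G with hNdef
  have hM : M.PosSemidef := gram_posSemidef _
  have hG : G.PosSemidef := gram_posSemidef _
  have hN : N.PosSemidef := by
    refine .of_dotProduct_mulVec_nonneg ?_ fun c => ?_
    · ext i j
      simp only [hNdef, Matrix.conjTranspose_apply, Matrix.smul_apply, star_trivial,
        Matrix.of_apply, smul_eq_mul]
      have hsym := congrFun (congrFun hG.1 i) j
      simp only [Matrix.conjTranspose_apply, star_trivial] at hsym
      rw [hsym]
    · rw [hNdef, Matrix.smul_mulVec, dotProduct_smul]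
      exact mul_nonneg (by positivity) (hG.dotProduct_mulVec_nonneg c)
  have hNM : (N - M).PosSemidef := by
    refine .of_dotProduct_mulVec_nonneg (hN.1.sub hM.1) fun c => ?_
    rw [Matrix.sub_mulVec, dotProduct_sub, hNdef, Matrix.smul_mulVec,
      dotProduct_smul, hGdef, hMdef, gram_quad, gram_quad]
    have hSu : ∑ i, c i • S (x i) = S (∑ i, c i • x i) := by
      rw [map_sum]; simp [map_smul]
    rw [hSu, smul_eq_mul]
    have := S.le_opNorm (∑ i, c i • x i)
    nlinarith [norm_nonneg (S (∑ i, c i • x i)), norm_nonneg (∑ i, c i • x i), norm_nonneg S]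
  have hdet := det_le_det_of_psd hM hN hNM
  rw [hNdef, Matrix.det_smul] at hdet
  simp only [Fintype.card_fin] at hdet
  calc gram (fun i => S (x i)) = M.det := rfl
    _ ≤ (‖S‖ ^ 2) ^ n * G.det := hdet
    _ = ‖S‖ ^ (2 * n) * gram x := by rw [← pow_mul]; rfl


/-- Let `A` be a bounded operator on a Hilbert space with finite-dimensional kernel `K`,
whose restriction to `Kᗮ` is a continuous linear equivalence `e` onto the range `R` of `A`
(so `e.symm` is the bounded inverse `Ã⁻¹ : R → Kᗮ`). With `P` the orthogonal projection
onto `K`, for any `e₁,…,eₙ`: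
`G(Ae₁,…,Aeₙ) = G(A(I−P)e₁,…,A(I−P)eₙ) ≥ (1/‖Ã⁻¹‖^{2n}) G((I−P)e₁,…,(I−P)eₙ)`. -/
theorem gram_ker_restriction {H : Type*} [NormedAddCommGroup H] [InnerProductSpace ℝ H]
    [CompleteSpace H] (A : H →L[ℝ] H)
    (K : Submodule ℝ H) [FiniteDimensional ℝ K] (hK : K = LinearMap.ker (A : H →ₗ[ℝ] H))
    (R : Submodule ℝ H) (hR : R = LinearMap.range (A : H →ₗ[ℝ] H))
    (e : (Kᗮ : Submodule ℝ H) ≃L[ℝ] R) (he : ∀ x : (Kᗮ : Submodule ℝ H), (e x : H) = A x)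
    {n : ℕ} (v : Fin n → H) :
    gram (fun i => A (v i)) =
        gram (fun i => A (v i - (K.orthogonalProjectionOnto (v i) : H))) ∧
      gram (fun i => A (v i)) ≥
        (1 / ‖(e.symm : R →L[ℝ] (Kᗮ : Submodule ℝ H))‖ ^ (2 * n)) *
          gram (fun i => v i - (K.orthogonalProjectionOnto (v i) : H)) := by
  have hann : ∀ i, A (v i - (K.orthogonalProjectionOnto (v i) : H)) = A (v i) := by
    intro i
    have hmem : ((K.orthogonalProjectionOnto (v i)) : H) ∈ LinearMap.ker (A : H →ₗ[ℝ] H) := by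
      rw [← hK]; exact SetLike.coe_mem _
    rw [map_sub, show A ((K.orthogonalProjectionOnto (v i)) : H) = 0 from LinearMap.mem_ker.mp hmem,
      sub_zero]
  constructor
  · congr 1
    funext i
    rw [hann i]
  · set w : Fin n → (Kᗮ : Submodule ℝ H) := fun i =>
      ⟨v i - (K.orthogonalProjectionOnto (v i) : H),
        K.sub_starProjection_mem_orthogonal (v i)⟩ with hw
    set x : Fin n → R := fun i => e (w i) with hx
    set S : R →L[ℝ] H :=
      (Kᗮ : Submodule ℝ H).subtypeL.comp
        ((e.symm : R →L[ℝ] (Kᗮ : Submodule ℝ H))) with hS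
    have hSx : ∀ i, S (x i) = v i - (K.orthogonalProjectionOnto (v i) : H) := by
      intro i
      simp [hS, hx, e.symm_apply_apply, hw]
    have hxc : ∀ i, ((x i : R) : H) = A (v i) := by
      intro i
      calc ((x i : R) : H) = A (w i) := he (w i)
        _ = A (v i) := by rw [hw]; exact hann i
    have hgx : gram (fun i => A (v i)) = gram x := by
      unfold gram
      congr 1
      ext i j
      have hij : (inner ℝ (A (v i)) (A (v j)) : ℝ) = inner ℝ (x i) (x j) := by
        rw [← hxc i, ← hxc j, Submodule.coe_inner]
      simpa using hij
    have key := gram_map_le S x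
    have hgw : gram (fun i => S (x i)) =
        gram (fun i => v i - (K.orthogonalProjectionOnto (v i) : H)) := by
      congr 1
      funext i
      rw [hSx i]
    have hnormS : ‖S‖ ≤ ‖((e.symm : R →L[ℝ] (Kᗮ : Submodule ℝ H)))‖ := by
      refine ContinuousLinearMap.opNorm_le_bound _
        (norm_nonneg ((e.symm : R →L[ℝ] (Kᗮ : Submodule ℝ H)))) fun y => ?_
      rw [hS]
      simp only [ContinuousLinearMap.coe_comp', Function.comp_apply,
        Submodule.coe_subtypeL', Submodule.coe_subtype]
      rw [Submodule.norm_coe]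
      exact ContinuousLinearMap.le_opNorm _ y
    set c := ‖((e.symm : R →L[ℝ] (Kᗮ : Submodule ℝ H)))‖ with hc
    have hkey2 : gram (fun i => v i - (K.orthogonalProjectionOnto (v i) : H)) ≤
        c ^ (2 * n) * gram (fun i => A (v i)) := by
      rw [← hgw, hgx]
      refine key.trans ?_
      apply mul_le_mul_of_nonneg_right _ (gram_nonneg x)
      exact pow_le_pow_left₀ (norm_nonneg S) hnormS _
    rcases eq_or_lt_of_le (norm_nonneg ((e.symm : R →L[ℝ] (Kᗮ : Submodule ℝ H)))) with h0 | hpos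
    · rcases Nat.eq_zero_or_pos n with hn | hn
      · subst hn
        simp [gram, Matrix.det_fin_zero, ge_iff_le]
      · rw [ge_iff_le, show c = 0 from hc.trans h0.symm, zero_pow (by omega), div_zero,
          zero_mul]
        exact gram_nonneg _
    · rw [ge_iff_le, one_div, inv_mul_le_iff₀ (by positivity)]
      exact hkey2
end
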